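/- Let G = ⊕_{p∈I} V_p be a decomposition of a higher-order Lie algebra of order n into subspaces, with subsets i_{(p_1,...,p_n)} ⊆ I such that [V_{p_1},...,V_{p_n}] ⊆ ⊕_{r ∈ i_{(p_1,...,p_n)}} V_r. Let S = ∪_{p∈I} S_p be a subset decomposition of the commutative semigroup S which is in resonance: S_{p_1}·S_{p_2}⋯S_{p_n} ⊆ ∩_{r ∈ i_{(p_1,...,p_n)}} S_r. Then G_R = ⊕_{p∈I} S_p ⊗ V_p is closed under the S-expanded n-bracket: [W_{p_1},...,W_{p_n}]_S ⊆ G_R, where W_p = S_p ⊗ V_p; hence G_R is a submultialgebra of S⊗G. -/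
import Mathlib


/-- Generalized Jacobi identity for an alternating (m+1)-bracket. -/
def GJI {K G : Type*} [CommRing K] [AddCommGroup G] [Module K G] {m : ℕ}
    (B : AlternatingMap K G G (Fin (m + 1))) : Prop :=
  ∀ x : Fin (2 * m + 1) → G,
    ∑ σ : Equiv.Perm (Fin (2 * m + 1)), (Equiv.Perm.sign σ : ℤ) •
      B (Fin.cons (B fun j => x (σ (Fin.castLE (by omega) j)))
        (fun j : Fin m => x (σ ⟨m + 1 + j.1, by have := j.isLt; omega⟩))) = 0

/-- n-fold product in a (possibly non-unital) multiplicative structure. -/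
def sprod {S : Type*} [Mul S] {m : ℕ} (l : Fin (m + 1) → S) : S :=
  (List.ofFn fun j : Fin m => l j.succ).foldl (· * ·) (l 0)

/-- The generator `λ ⊗ x` of the S-expanded module `S ⊗ G` (modelled as the free
module `S →₀ G` on the semigroup S with coefficients in G). -/
noncomputable def gen {S G : Type*} [AddCommGroup G] (lam : S) (x : G) : S →₀ G :=
  Finsupp.single lam x

lemma multilinear_mem_of_span {K M N : Type*} [Field K] [AddCommGroup M] [Module K M]
    [AddCommGroup N] [Module K N] {n : ℕ}
    (f : MultilinearMap K (fun _ : Fin n => M) N) (s : Fin n → Set M) (T : Submodule K N)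
    (hgen : ∀ g : Fin n → M, (∀ i, g i ∈ s i) → f g ∈ T) :
    ∀ x : Fin n → M, (∀ i, x i ∈ Submodule.span K (s i)) → f x ∈ T := by
  suffices h : ∀ (t : Finset (Fin n)) (x : Fin n → M),
      (∀ i ∈ t, x i ∈ Submodule.span K (s i)) → (∀ i ∉ t, x i ∈ s i) → f x ∈ T by
    intro x hx
    exact h Finset.univ x (fun i _ => hx i) (fun i hi => absurd (Finset.mem_univ i) hi)
  intro t
  induction t using Finset.induction_on with
  | empty => intro x _ h2; exact hgen x fun i => h2 i (by simp)
  | @insert a t ha ih =>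
    intro x h1 h2
    have hxa : x a ∈ Submodule.span K (s a) := h1 a (Finset.mem_insert_self a t)
    have key : ∀ v ∈ Submodule.span K (s a), f (Function.update x a v) ∈ T := by
      intro v hv
      induction hv using Submodule.span_induction with
      | mem v hv =>
        apply ih
        · intro i hi
          rcases eq_or_ne i a with rfl | hne
          · exact absurd hi ha
          · rw [Function.update_of_ne hne]
            exact h1 i (Finset.mem_insert_of_mem hi)
        · intro i hi
          rcases eq_or_ne i a with rfl | hne
          · simpa using hv
          · rw [Function.update_of_ne hne]
            exact h2 i (by simp [hne, hi])
      | zero => simp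
      | add u v _ _ hu hv => rw [f.map_update_add]; exact T.add_mem hu hv
      | smul c u _ hu => rw [f.map_update_smul]; exact T.smul_mem c hu
    have := key (x a) hxa
    rwa [Function.update_eq_self] at this

lemma gen_mem_resonant {K G S I : Type*} [Field K] [AddCommGroup G] [Module K G]
    (V : I → Submodule K G) (Sp : I → Set S) (J : Set I)
    (mu : S) (hmu : mu ∈ ⋂ r ∈ J, Sp r) (w : G) (hw : w ∈ ⨆ r ∈ J, V r) :
    gen mu w ∈ ⨆ q, Submodule.span K
        {e : S →₀ G | ∃ lam ∈ Sp q, ∃ v ∈ V q, e = gen lam v} := by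
  have h : gen mu w ∈ Submodule.map (Finsupp.lsingle (M := G) (R := K) mu) (⨆ r ∈ J, V r) :=
    ⟨w, hw, rfl⟩
  rw [Submodule.map_iSup] at h
  refine SetLike.le_def.mp ?_ h
  apply iSup_le; intro r
  rw [Submodule.map_iSup]
  apply iSup_le; intro hr
  refine le_trans ?_ (le_iSup _ r)
  rw [Submodule.map_le_iff_le_comap]
  intro v hv
  exact Submodule.subset_span ⟨mu, by simpa using Set.mem_iInter₂.mp hmu r hr, v, hv, rfl⟩

/-- the resonant subspace `G_R = ⊕_p S_p ⊗ V_p` is closed under the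
S-expanded bracket: `[W_{p_1},...,W_{p_n}]_S ⊆ G_R`, hence `G_R` is a
submultialgebra of `S ⊗ G`. -/
theorem resonant_submultialgebra {K G S I : Type*} [Field K] [AddCommGroup G] [Module K G]
    [CommSemigroup S] (m : ℕ) (hn : Even (m + 1))
    (B : AlternatingMap K G G (Fin (m + 1))) (hB : GJI B)
    (V : I → Submodule K G) (ind : (Fin (m + 1) → I) → Set I)
    (hstruct : ∀ (p : Fin (m + 1) → I) (x : Fin (m + 1) → G),
      (∀ k, x k ∈ V (p k)) → B x ∈ ⨆ r ∈ ind p, V r)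
    (Sp : I → Set S)
    (hres : ∀ (p : Fin (m + 1) → I) (lam : Fin (m + 1) → S),
      (∀ k, lam k ∈ Sp (p k)) → sprod lam ∈ ⋂ r ∈ ind p, Sp r)
    (Bexp : AlternatingMap K (S →₀ G) (S →₀ G) (Fin (m + 1)))
    (hBexp : ∀ (lam : Fin (m + 1) → S) (x : Fin (m + 1) → G),
      Bexp (fun k => gen (lam k) (x k)) = gen (sprod lam) (B x)) :
    (∀ (p : Fin (m + 1) → I) (x : Fin (m + 1) → (S →₀ G)),
      (∀ k, x k ∈ Submodule.span K
        {e | ∃ lam ∈ Sp (p k), ∃ v ∈ V (p k), e = gen lam v}) →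
      Bexp x ∈ ⨆ q, Submodule.span K
        {e | ∃ lam ∈ Sp q, ∃ v ∈ V q, e = gen lam v}) ∧
    (∀ x : Fin (m + 1) → (S →₀ G),
      (∀ k, x k ∈ ⨆ q, Submodule.span K
        {e | ∃ lam ∈ Sp q, ∃ v ∈ V q, e = gen lam v}) →
      Bexp x ∈ ⨆ q, Submodule.span K
        {e | ∃ lam ∈ Sp q, ∃ v ∈ V q, e = gen lam v}) := by
  
  set A : I → Set (S →₀ G) := fun q => {e | ∃ lam ∈ Sp q, ∃ v ∈ V q, e = gen lam v} with hA
  set T : Submodule K (S →₀ G) := ⨆ q, Submodule.span K (A q) with hT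
  have hgen : ∀ (p : Fin (m + 1) → I) (g : Fin (m + 1) → (S →₀ G)),
      (∀ k, g k ∈ A (p k)) → Bexp g ∈ T := by
    intro p g hg
    choose lam hlam v hv hgv using hg
    have : g = fun k => gen (lam k) (v k) := funext hgv
    rw [this]
    have := hBexp lam v
    rw [show Bexp (fun k => gen (lam k) (v k)) = gen (sprod lam) (B v) from this]
    exact gen_mem_resonant V Sp (ind p) _ (hres p lam hlam) _ (hstruct p v hv)
  have part1 : ∀ (p : Fin (m + 1) → I) (x : Fin (m + 1) → (S →₀ G)),
      (∀ k, x k ∈ Submodule.span K (A (p k))) → Bexp x ∈ T := by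
    intro p x hx
    exact multilinear_mem_of_span Bexp.toMultilinearMap (fun k => A (p k)) T (hgen p) x hx
  refine ⟨part1, ?_⟩
  intro x hx
  have hT' : T = Submodule.span K (⋃ q, A q) := by rw [Submodule.span_iUnion]
  refine multilinear_mem_of_span Bexp.toMultilinearMap (fun _ => ⋃ q, A q) T ?_ x ?_
  · intro g hg
    choose p hp using fun k => Set.mem_iUnion.mp (hg k)
    exact hgen p g hp
  · intro k
    rw [← hT']
    exact hx k
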